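/- Let A : ℝ → M_n(ℝ) be a continuous matrix-valued function whose values pairwise commute, i.e., A(s) A(t) = A(t) A(s) for all s, t ∈ ℝ, and let g₀ ∈ M_n(ℝ). Then the function g(t) := g₀ · exp(∫₀ᵗ A(s) ds) (matrix exponential) satisfies g(0) = g₀ and, for every t ∈ ℝ, g is differentiable at t with g′(t) = g(t) A(t). (This is the statement that for an Abelian matrix Lie group the Magnus expansion of the solution of the linear initial value problem ġ = g ξ, g(0) = g₀ reduces to its first term, g(t) = g₀ exp(∫₀ᵗ ξ(s) ds).) -/

import Mathlib

/-!
STATEMENT 4: for a continuous family of pairwise commuting matrices A(·) (an Abelian situation),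
g(t) := g₀ · exp(∫₀ᵗ A(s) ds) solves the linear IVP ġ = g A, g(0) = g₀
(the Magnus expansion reduces to its first term).
-/

open Matrix intervalIntegral

attribute [local instance] Matrix.linftyOpNormedRing Matrix.linftyOpNormedAlgebra

theorem magnus_first_term_abelian
    (n : ℕ) (A : ℝ → Matrix (Fin n) (Fin n) ℝ) (hA : Continuous A)
    (hcomm : ∀ s t : ℝ, A s * A t = A t * A s)
    (g₀ : Matrix (Fin n) (Fin n) ℝ)
    (g : ℝ → Matrix (Fin n) (Fin n) ℝ)
    (hg : ∀ t : ℝ, g t = g₀ * NormedSpace.exp (∫ s in (0:ℝ)..t, A s)) :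
    g 0 = g₀ ∧ ∀ t : ℝ, HasDerivAt g (g t * A t) t := by
  have hInt : ∀ a b : ℝ, @IntervalIntegrable _ PseudoMetricSpace.toUniformSpace.toTopologicalSpace _ A MeasureTheory.volume a b :=
    fun a b => hA.intervalIntegrable a b
  -- integrals commute with each A t
  have hcommI : ∀ (t a b : ℝ), Commute (∫ s in a..b, A s) (A t) := by
    intro t a b
    unfold Commute SemiconjBy
    rw [show (∫ s in a..b, A s) * A t
        = (ContinuousLinearMap.mul ℝ (Matrix (Fin n) (Fin n) ℝ)).flip (A t) (∫ s in a..b, A s) from rfl,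
      ← ContinuousLinearMap.intervalIntegral_comp_comm _ (hInt a b),
      show A t * (∫ s in a..b, A s)
        = ContinuousLinearMap.mul ℝ (Matrix (Fin n) (Fin n) ℝ) (A t) (∫ s in a..b, A s) from rfl,
      ← ContinuousLinearMap.intervalIntegral_comp_comm _ (hInt a b)]
    simp only [ContinuousLinearMap.flip_apply, ContinuousLinearMap.mul_apply']
    exact intervalIntegral.integral_congr fun s _ => hcomm s t
  have hcommII : ∀ (a b c d : ℝ), Commute (∫ s in a..b, A s) (∫ s in c..d, A s) := by
    intro a b c d
    unfold Commute SemiconjBy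
    rw [show (∫ s in a..b, A s) * (∫ s in c..d, A s)
        = ContinuousLinearMap.mul ℝ (Matrix (Fin n) (Fin n) ℝ) (∫ s in a..b, A s) (∫ s in c..d, A s) from rfl,
      ← ContinuousLinearMap.intervalIntegral_comp_comm _ (hInt c d),
      show (∫ s in c..d, A s) * (∫ s in a..b, A s)
        = (ContinuousLinearMap.mul ℝ (Matrix (Fin n) (Fin n) ℝ)).flip (∫ s in a..b, A s) (∫ s in c..d, A s) from rfl,
      ← ContinuousLinearMap.intervalIntegral_comp_comm _ (hInt c d)]
    simp only [ContinuousLinearMap.flip_apply, ContinuousLinearMap.mul_apply']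
    exact intervalIntegral.integral_congr fun s _ => hcommI s a b
  constructor
  · rw [hg 0]; simp
  · intro t
    -- g h = g t * exp (∫ in t..h, A)
    have key : ∀ h : ℝ, g h = g t * NormedSpace.exp (∫ s in t..h, A s) := by
      intro h
      erw [hg h, hg t, mul_assoc, ← NormedSpace.exp_add_of_commute (hcommII 0 t t h)]
      congr 2
      rw [intervalIntegral.integral_add_adjacent_intervals (hInt 0 t) (hInt t h)]
    have hψ : HasDerivAt (fun h : ℝ => ∫ s in t..h, A s) (A t) t :=
      (hA.integral_hasStrictDerivAt t t).hasDerivAt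
    have hexp : HasDerivAt (fun h : ℝ => NormedSpace.exp (∫ s in t..h, A s)) (A t) t := by
      have h0 : HasFDerivAt (NormedSpace.exp)
          (1 : Matrix (Fin n) (Fin n) ℝ →L[ℝ] Matrix (Fin n) (Fin n) ℝ)
          (∫ s in t..t, A s) := by
        rw [intervalIntegral.integral_same]; exact hasFDerivAt_exp_zero
      have := h0.comp_hasDerivAt t hψ
      exact this
    have := (hexp.const_mul (g t)).congr_deriv rfl
    have hfinal : HasDerivAt g (g t * A t) t := by
      refine HasDerivAt.congr_of_eventuallyEq (hexp.const_mul (g t)) ?_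
      exact Filter.Eventually.of_forall fun h => key h
    exact hfinal
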